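/- Given β₀, σ₀ ∈ (0,1), set γ₀ = (1−β₀)/100 and choose N₀ ∈ ℕ with σ₀^{N₀−1} ≤ (1−β₀)/100. Let f(z) = λz and g(z) = Λz be linear maps of ℂ with |λ| ≤ β₀|Λ| and |Λ| ≤ σ₀, and let f̃(z) = (az+b)/(cz+d) be a Möbius transformation with max{| |a|/|λ| − 1|, |b|, |c|, ||d| − 1|} < γ₀. Then for every r ∈ [0,1] such that f̃(B(0,r)) is not contained in g(B(0,r)), the sets f̃(g^{N₀}(B(0,r))) and g^{N₀}(B(0,r)) are disjoint. -/

import Mathlib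

lemma abs_sub_abs_le_abs_add' (x y : ℂ) :
    ‖y‖ - ‖x‖ ≤ ‖x + y‖ := by
  have := norm_sub_norm_le y (-x)
  simpa [sub_neg_eq_add, add_comm] using this

/-- Lemma `l.aproximacao`: if `f̃` is a `γ₀`-deformation of `f(z)=λz`, `|λ| ≤ β₀|Λ|`,
`|Λ| ≤ σ₀`, `γ₀ = (1−β₀)/100`, `σ₀^{N₀−1} ≤ (1−β₀)/100`, and `f̃(B(0,r)) ⊄ g(B(0,r))`
for some `r ∈ [0,1]` (where `g(z)=Λz`), then `f̃(g^{N₀}(B(0,r)))` and `g^{N₀}(B(0,r))`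
are disjoint. Here `g^{N₀}(B(0,r)) = B(0,|Λ|^{N₀} r)`. -/
theorem stmt5 (β₀ σ₀ : ℝ) (hβ : β₀ ∈ Set.Ioo (0:ℝ) 1) (hσ : σ₀ ∈ Set.Ioo (0:ℝ) 1)
    (N₀ : ℕ) (hN : σ₀ ^ (N₀ - 1) ≤ (1 - β₀) / 100)
    (lam Lam a b c d : ℂ) (hlam : lam ≠ 0)
    (h1 : ‖lam‖ ≤ β₀ * ‖Lam‖) (h2 : ‖Lam‖ ≤ σ₀)
    (hdefa : |‖a‖ / ‖lam‖ - 1| < (1 - β₀) / 100)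
    (hdefb : ‖b‖ < (1 - β₀) / 100)
    (hdefc : ‖c‖ < (1 - β₀) / 100)
    (hdefd : |‖d‖ - 1| < (1 - β₀) / 100)
    (r : ℝ) (hr : r ∈ Set.Icc (0:ℝ) 1)
    (hnot : ¬ ((fun z : ℂ => (a * z + b) / (c * z + d)) '' Metric.closedBall 0 r
        ⊆ Metric.closedBall 0 (‖Lam‖ * r))) :
    Disjoint
      ((fun z : ℂ => (a * z + b) / (c * z + d)) ''
        Metric.closedBall (0:ℂ) (‖Lam‖ ^ N₀ * r))
      (Metric.closedBall (0:ℂ) (‖Lam‖ ^ N₀ * r)) := by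
  obtain ⟨hβ0, hβ1⟩ := hβ
  obtain ⟨hσ0, hσ1⟩ := hσ
  obtain ⟨hr0, hr1⟩ := hr
  set γ : ℝ := (1 - β₀) / 100 with hγdef
  have hγ0 : 0 < γ := by simp only [hγdef]; linarith
  have hγlt : γ < 1 / 100 := by simp only [hγdef]; linarith
  have hγeq : 1 - β₀ = 100 * γ := by simp only [hγdef]; ring
  -- N₀ ≥ 1
  obtain ⟨m, rfl⟩ : ∃ m, N₀ = m + 1 := by
    rcases Nat.eq_zero_or_pos N₀ with h | h
    · exfalso; rw [h] at hN; simp at hN; linarith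
    · exact ⟨N₀ - 1, (Nat.succ_pred_eq_of_pos h).symm⟩
  have hNm : (m + 1) - 1 = m := rfl
  rw [hNm] at hN
  -- Λ ≠ 0
  have hl0 : 0 < ‖lam‖ := norm_pos_iff.mpr hlam
  have hL0 : 0 < ‖Lam‖ := by
    by_contra h
    push_neg at h
    have h0 : ‖Lam‖ = 0 := le_antisymm h (norm_nonneg _)
    rw [h0] at h1
    nlinarith
  set L : ℝ := ‖Lam‖ with hLdef
  set l : ℝ := ‖lam‖ with hldef
  -- the basic coefficient bounds
  have hA : ‖a‖ ≤ (1 + γ) * l := by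
    have h := (abs_lt.mp hdefa).2
    have h' := (div_lt_iff₀ hl0).mp (by linarith : ‖a‖ / l < 1 + γ)
    linarith [mul_comm (1 + γ) l]
  have hD1 : 1 - γ ≤ ‖d‖ := by
    have := (abs_lt.mp hdefd).1; linarith
  have hD2 : ‖d‖ ≤ 1 + γ := by
    have := (abs_lt.mp hdefd).2; linarith
  have hC : ‖c‖ < γ := hdefc
  -- handle r = 0
  rcases eq_or_lt_of_le hr0 with hr0' | hrpos
  · rw [← hr0'] at hnot ⊢
    simp only [mul_zero, Metric.closedBall_zero, Set.image_singleton,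
      Set.singleton_subset_iff, mul_zero, zero_add] at hnot ⊢
    rw [Set.disjoint_singleton_left]
    exact hnot
  -- main case r > 0
  have hLr0 : 0 < L * r := mul_pos hL0 hrpos
  have hX : (0:ℝ) ≤ γ * (L * r) := by positivity
  -- extract a witness from hnot
  obtain ⟨w, ⟨z₀, hz₀, rfl⟩, hw⟩ := Set.not_subset.mp hnot
  rw [Metric.mem_closedBall, dist_zero_right] at hz₀
  rw [Metric.mem_closedBall, dist_zero_right, not_le] at hw
  simp only at hw
  rw [norm_div] at hw
  -- denominator bound at z₀
  have hden0 : 1 - 2 * γ ≤ ‖c * z₀ + d‖ := by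
    have h1' := abs_sub_abs_le_abs_add' (c * z₀) d
    have h2' : ‖c * z₀‖ ≤ γ * 1 := by
      rw [norm_mul]
      exact mul_le_mul hC.le (hz₀.trans hr1) (norm_nonneg _) hγ0.le
    linarith
  have hdenpos : 0 < ‖c * z₀ + d‖ := by linarith
  -- numerator bound at z₀, giving a lower bound on |b|
  have hnum0 : L * r * (1 - 2 * γ) < ‖a * z₀ + b‖ := by
    have h := (lt_div_iff₀ hdenpos).mp hw
    calc L * r * (1 - 2 * γ) ≤ L * r * ‖c * z₀ + d‖ := by
          apply mul_le_mul_of_nonneg_left hden0; positivity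
      _ < ‖a * z₀ + b‖ := h
  have hB : 97 * (γ * (L * r)) ≤ ‖b‖ := by
    have h1' : ‖a * z₀ + b‖ ≤ ‖a‖ * ‖z₀‖ + ‖b‖ := by
      simpa [norm_mul] using norm_add_le (a * z₀) b
    have h2' : ‖a‖ * ‖z₀‖ ≤ (1 + γ) * l * r :=
      mul_le_mul hA hz₀ (norm_nonneg _) (by positivity)
    have h3' : (1 + γ) * l * r ≤ (1 + γ) * (β₀ * L) * r := by
      apply mul_le_mul_of_nonneg_right _ hr0
      apply mul_le_mul_of_nonneg_left h1 (by linarith)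
    have hγeq' : (1 - β₀) * (L * r) = 100 * (γ * (L * r)) := by rw [hγeq]; ring
    have hint1 : γ * (β₀ * (L * r)) ≤ γ * (L * r) := by
      nlinarith [mul_nonneg hX (show (0:ℝ) ≤ 1 - β₀ by linarith)]
    linarith [h1', h2', h3', hnum0, hγeq', hint1]
  -- the small radius s
  set s : ℝ := L ^ (m + 1) * r with hsdef
  have hs0 : 0 ≤ s := by positivity
  have hLpow : L ^ m ≤ γ := by
    calc L ^ m ≤ σ₀ ^ m := pow_le_pow_left₀ hL0.le h2 _
      _ ≤ γ := hN
  have hs_le : s ≤ γ * (L * r) := by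
    have h' : L ^ m * (L * r) ≤ γ * (L * r) :=
      mul_le_mul_of_nonneg_right hLpow (by positivity)
    calc s = L ^ m * (L * r) := by rw [hsdef]; ring
      _ ≤ γ * (L * r) := h'
  have hs1 : s ≤ 1 := by
    have hL1 : L ≤ 1 := h2.trans hσ1.le
    have hp : L ^ (m + 1) ≤ 1 := pow_le_one₀ hL0.le hL1
    calc s = L ^ (m + 1) * r := hsdef
      _ ≤ 1 * 1 := mul_le_mul hp hr1 hr0 zero_le_one
      _ = 1 := mul_one 1
  -- prove disjointness
  rw [Set.disjoint_left]
  rintro x ⟨z, hz, rfl⟩ hx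
  rw [Metric.mem_closedBall, dist_zero_right] at hz
  rw [Metric.mem_closedBall, dist_zero_right] at hx
  simp only at hx
  rw [norm_div] at hx
  -- denominator bounds at z
  have hczd : ‖c * z‖ ≤ γ * 1 := by
    rw [norm_mul]
    exact mul_le_mul hC.le (hz.trans hs1) (norm_nonneg _) hγ0.le
  have hden : 1 - 2 * γ ≤ ‖c * z + d‖ := by
    have h1' := abs_sub_abs_le_abs_add' (c * z) d
    linarith
  have hdenpos' : 0 < ‖c * z + d‖ := by linarith
  have hden2 : ‖c * z + d‖ ≤ 1 + 2 * γ := by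
    have h1' : ‖c * z + d‖ ≤ ‖c * z‖ + ‖d‖ :=
      norm_add_le _ _
    linarith
  -- numerator bound at z
  have hnum : 95 * (γ * (L * r)) ≤ ‖a * z + b‖ := by
    have h1' := abs_sub_abs_le_abs_add' (a * z) b
    have h2' : ‖a * z‖ ≤ (1 + γ) * l * s := by
      rw [norm_mul]
      exact mul_le_mul hA hz (norm_nonneg _) (by positivity)
    have h3' : (1 + γ) * l * s ≤ 2 * (γ * (L * r)) := by
      have hlL : l ≤ L := by
        have := mul_le_mul_of_nonneg_right hβ1.le hL0.le
        linarith
      have hL1 : L ≤ 1 := h2.trans hσ1.le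
      have hl1 : l ≤ 1 := hlL.trans hL1
      have h4 : (1 + γ) * l ≤ 2 := by
        have := mul_le_mul_of_nonneg_left hl1 (show (0:ℝ) ≤ 1 + γ by linarith)
        simp only [mul_one] at this
        linarith
      calc (1 + γ) * l * s ≤ 2 * s := by
            apply mul_le_mul_of_nonneg_right h4 hs0
        _ ≤ 2 * (γ * (L * r)) := by linarith
    linarith
  -- contradiction
  have hx' : ‖a * z + b‖ ≤ s * ‖c * z + d‖ :=
    (div_le_iff₀ hdenpos').mp hx
  have p1 : s * ‖c * z + d‖ ≤ s * (1 + 2 * γ) :=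
    mul_le_mul_of_nonneg_left hden2 hs0
  have p2 : s * (1 + 2 * γ) ≤ (γ * (L * r)) * (1 + 2 * γ) :=
    mul_le_mul_of_nonneg_right hs_le (by linarith)
  have p3 : (γ * (L * r)) * (1 + 2 * γ) ≤ (γ * (L * r)) * 2 :=
    mul_le_mul_of_nonneg_left (by linarith) hX
  have hXpos : 0 < γ * (L * r) := by positivity
  linarith
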